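/- Let $f:X\to Y$ be a 1-Lipschitz map from a geodesic metric space $X$ to a metric space $Y$. Suppose that for every $R>0$ the family $\{f^{-1}(B_R(y))\}_{y\in Y}$ satisfies $\mathrm{asdim}\le m$ uniformly, and that $\mathrm{coasdim}(Y)\le fin+k$. Then $\mathrm{coasdim}(X)\le fin+k(m+1)$. -/

import Mathlib

noncomputable section
open Metric Set
open scoped ENNReal

/-- A family of subsets is `R`-bounded if every member has diameter at most `R`. -/
def RBounded {X : Type*} [PseudoMetricSpace X] (R : ℝ) (U : Set (Set X)) : Prop :=
  ∀ A ∈ U, ∀ x ∈ A, ∀ y ∈ A, dist x y ≤ R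

/-- A family of subsets is `r`-disjoint if distinct members are at distance at least `r`. -/
def RDisjoint {X : Type*} [PseudoMetricSpace X] (r : ℝ) (U : Set (Set X)) : Prop :=
  ∀ A ∈ U, ∀ B ∈ U, A ≠ B → ∀ x ∈ A, ∀ y ∈ B, r ≤ dist x y

/-- A family of subsets is uniformly bounded if it is `R`-bounded for some `R`. -/
def UniformlyBounded {X : Type*} [PseudoMetricSpace X] (U : Set (Set X)) : Prop :=
  ∃ R : ℝ, RBounded R U

/-- `asdim X ≤ n`: for every `r > 0` there are `n+1` uniformly bounded, `r`-disjoint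
families of subsets of `X` whose union covers `X`. -/
def AsdimLE (X : Type*) [PseudoMetricSpace X] (n : ℕ) : Prop :=
  ∀ r : ℝ, 0 < r → ∃ U : Fin (n + 1) → Set (Set X),
    (∀ i, UniformlyBounded (U i)) ∧ (∀ i, RDisjoint r (U i)) ∧
    (Set.univ : Set X) ⊆ ⋃ i, ⋃₀ U i

/-- `coasdim X ≤ fin + k`: for every `n > 0` there are `k` many `n`-disjoint, `R`-bounded
families whose complement has asymptotic dimension at most some `m`. -/
def CoasdimLE (X : Type*) [PseudoMetricSpace X] (k : ℕ) : Prop :=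
  ∀ n : ℝ, 0 < n → ∃ (R : ℝ) (m : ℕ) (U : Fin k → Set (Set X)),
    (∀ i, RDisjoint n (U i)) ∧ (∀ i, RBounded R (U i)) ∧
    AsdimLE (↥((⋃ i, ⋃₀ U i)ᶜ : Set X)) m

/-- A family of subsets `s α ⊆ X` satisfies `asdim ≤ m` uniformly. -/
def AsdimLEUnif {X : Type*} [PseudoMetricSpace X] {ι : Type*} (s : ι → Set X) (m : ℕ) : Prop :=
  ∀ r : ℝ, 0 < r → ∃ R : ℝ, ∀ α, ∃ U : Fin (m + 1) → Set (Set X),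
    (∀ i, RDisjoint r (U i)) ∧ (∀ i, RBounded R (U i)) ∧ s α ⊆ ⋃ i, ⋃₀ U i

/-- A geodesic metric space: any two points are joined by an isometrically embedded segment. -/
def GeodesicMetricSpace (X : Type*) [PseudoMetricSpace X] : Prop :=
  ∀ x y : X, ∃ γ : ℝ → X, γ 0 = x ∧ γ (dist x y) = y ∧
    ∀ s ∈ Set.Icc (0 : ℝ) (dist x y), ∀ t ∈ Set.Icc (0 : ℝ) (dist x y),
      dist (γ s) (γ t) = |s - t|

-- auxiliary lemmas

lemma unif_reindex {X : Type*} [PseudoMetricSpace X] {ι κ : Type*} {s : ι → Set X} {m : ℕ}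
    (h : AsdimLEUnif s m) (t : κ → ι) : AsdimLEUnif (fun j => s (t j)) m :=
  fun r hr => let ⟨R, hR⟩ := h r hr; ⟨R, fun j => hR (t j)⟩

lemma unif_congr {X : Type*} [PseudoMetricSpace X] {ι : Type*} {s t : ι → Set X} {m : ℕ}
    (h : AsdimLEUnif s m) (hst : ∀ i, t i = s i) : AsdimLEUnif t m := by
  have : t = s := funext hst
  rw [this]; exact h

lemma unif_restrict {X : Type*} [PseudoMetricSpace X] {ι : Type*} {s : ι → Set X} {m : ℕ}
    (h : AsdimLEUnif s m) (C : Set X) :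
    AsdimLEUnif (fun i => (Subtype.val ⁻¹' s i : Set C)) m := by
  intro r hr
  obtain ⟨R, hR⟩ := h r hr
  refine ⟨R, fun α => ?_⟩
  obtain ⟨U, hUd, hUb, hUc⟩ := hR α
  refine ⟨fun j => (fun A => (Subtype.val ⁻¹' A : Set C)) '' U j, ?_, ?_, ?_⟩
  · rintro j A' ⟨A, hA, rfl⟩ B' ⟨B, hB, rfl⟩ hne x hx y hy
    have hAB : A ≠ B := by rintro rfl; exact hne rfl
    have := hUd j A hA B hB hAB x.val hx y.val hy
    rwa [Subtype.dist_eq]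
  · rintro j A' ⟨A, hA, rfl⟩ x hx y hy
    have := hUb j A hA x.val hx y.val hy
    rwa [Subtype.dist_eq]
  · intro x hx
    have : (x : X) ∈ ⋃ i, ⋃₀ U i := hUc hx
    obtain ⟨_, ⟨j, rfl⟩, A, hA, hxA⟩ := this
    exact mem_iUnion.2 ⟨j, ⟨Subtype.val ⁻¹' A, ⟨A, hA, rfl⟩, hxA⟩⟩

lemma core_pullback {X Y : Type*} [PseudoMetricSpace X] [PseudoMetricSpace Y]
    (f : X → Y) (hf : LipschitzWith 1 f) (m : ℕ) (r R R' : ℝ)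
    (g : Y → Fin (m + 1) → Set (Set X))
    (hgd : ∀ y j, RDisjoint r (g y j)) (hgb : ∀ y j, RBounded R' (g y j))
    (hgc : ∀ y, f ⁻¹' ball y (R + 1) ⊆ ⋃ j, ⋃₀ g y j)
    (V : Set (Set Y)) (hVd : RDisjoint r V) (hVb : RBounded R V) :
    ∃ W : Fin (m + 1) → Set (Set X),
      (∀ j, RDisjoint r (W j)) ∧ (∀ j, RBounded R' (W j)) ∧
      f ⁻¹' (⋃₀ V) ⊆ ⋃ j, ⋃₀ W j := by
  classical
  refine ⟨fun j => {Q | ∃ A, A ∈ V ∧ ∃ hA : A.Nonempty, ∃ P ∈ g hA.choose j, Q = P ∩ f ⁻¹' A},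
    ?_, ?_, ?_⟩
  · rintro j Q1 ⟨A, hAV, hA, P, hP, rfl⟩ Q2 ⟨B, hBV, hB, P', hP', rfl⟩ hne x hx y hy
    by_cases hAB : A = B
    · subst hAB
      have hchoose : hA.choose = hB.choose := rfl
      have hPP' : P ≠ P' := by
        rintro rfl; exact hne rfl
      exact hgd hA.choose j P hP P' (hchoose ▸ hP') hPP' x hx.1 y hy.1
    · have h1 : r ≤ dist (f x) (f y) := hVd A hAV B hBV hAB (f x) hx.2 (f y) hy.2
      have h2 : dist (f x) (f y) ≤ dist x y := by
        have := hf.dist_le_mul x y; simpa using this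
      linarith
  · rintro j Q ⟨A, hAV, hA, P, hP, rfl⟩ x hx y hy
    exact hgb hA.choose j P hP x hx.1 y hy.1
  · intro x hx
    obtain ⟨A, hAV, hfxA⟩ := hx
    have hA : A.Nonempty := ⟨f x, hfxA⟩
    have hy0 : hA.choose ∈ A := hA.choose_spec
    have hball : x ∈ f ⁻¹' ball hA.choose (R + 1) := by
      have := hVb A hAV (f x) hfxA hA.choose hy0
      simp only [mem_preimage, mem_ball]
      linarith
    obtain ⟨_, ⟨j, rfl⟩, P, hP, hxP⟩ := hgc hA.choose hball
    exact mem_iUnion.2 ⟨j, ⟨P ∩ f ⁻¹' A, ⟨A, hAV, hA, P, hP, rfl⟩, hxP, hfxA⟩⟩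

lemma hurewicz_easy {X Y : Type*} [PseudoMetricSpace X] [PseudoMetricSpace Y]
    (f : X → Y) (hf : LipschitzWith 1 f) (m mY : ℕ)
    (hfib : ∀ R : ℝ, 0 < R → AsdimLEUnif (fun y : Y => f ⁻¹' Metric.ball y R) m)
    (hY : AsdimLE Y mY) : AsdimLE X (mY * (m + 1) + m) := by
  intro r hr
  obtain ⟨V, hVub, hVd, hVc⟩ := hY r hr
  choose Rs hRs using hVub
  set R : ℝ := ∑ i, |Rs i| with hR
  have hRVb : ∀ i, RBounded R (V i) := by
    intro i A hA x hx y hy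
    refine (hRs i A hA x hx y hy).trans ((le_abs_self _).trans ?_)
    rw [hR]
    exact Finset.single_le_sum (f := fun j => |Rs j|) (fun j _ => abs_nonneg (Rs j))
      (Finset.mem_univ i)
  have hRnn : 0 ≤ R := by
    rw [hR]
    exact Finset.sum_nonneg fun j _ => abs_nonneg (Rs j)
  have hRpos : 0 < R + 1 := by linarith
  obtain ⟨R', hR'⟩ := hfib (R + 1) hRpos r hr
  choose g hgd hgb hgc using hR'
  have hcore := fun i => core_pullback f hf m r R R' g hgd hgb hgc (V i) (hVd i) (hRVb i)
  choose W hWd hWb hWc using hcore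
  have hcard : mY * (m + 1) + m + 1 = (mY + 1) * (m + 1) := by ring
  refine ⟨fun i => W (finProdFinEquiv.symm (Fin.cast hcard i)).1
      (finProdFinEquiv.symm (Fin.cast hcard i)).2, fun i => ⟨R', hWb _ _⟩, fun i => hWd _ _, ?_⟩
  intro x hx
  have hfx : f x ∈ ⋃ i, ⋃₀ V i := hVc (mem_univ _)
  obtain ⟨_, ⟨i, rfl⟩, hfxV⟩ := hfx
  have hxW : x ∈ ⋃ j, ⋃₀ W i j := hWc i hfxV
  obtain ⟨_, ⟨j, rfl⟩, hxWj⟩ := hxW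
  refine mem_iUnion.2 ⟨Fin.cast hcard.symm (finProdFinEquiv (i, j)), ?_⟩
  have hidx : finProdFinEquiv.symm (Fin.cast hcard (Fin.cast hcard.symm (finProdFinEquiv (i, j))))
      = (i, j) := by
    rw [show Fin.cast hcard (Fin.cast hcard.symm (finProdFinEquiv (i, j)))
        = finProdFinEquiv (i, j) from rfl, Equiv.symm_apply_apply]
  simp only [hidx]
  exact hxWj


/-- Theorem 3.16 (Hurewicz-type theorem for coasdim). -/
theorem coasdim_hurewicz {X Y : Type*} [PseudoMetricSpace X] [PseudoMetricSpace Y]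
    (f : X → Y) (hgeo : GeodesicMetricSpace X) (hf : LipschitzWith 1 f) (m k : ℕ)
    (hfib : ∀ R : ℝ, 0 < R → AsdimLEUnif (fun y : Y => f ⁻¹' Metric.ball y R) m)
    (hY : CoasdimLE Y k) :
    CoasdimLE X (k * (m + 1)) := by
  intro n hn
  obtain ⟨RY, mY, V, hVd, hVb, hYc⟩ := hY n hn
  have hRpos : 0 < |RY| + 1 := by positivity
  obtain ⟨R', hR'⟩ := hfib (|RY| + 1) hRpos n hn
  choose g hgd hgb hgc using hR'
  have hVb' : ∀ i, RBounded |RY| (V i) := fun i A hA x hx y hy =>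
    (hVb i A hA x hx y hy).trans (le_abs_self _)
  have hcore := fun i => core_pullback f hf m n |RY| R' g hgd hgb hgc (V i) (hVd i) (hVb' i)
  choose W hWd hWb hWc using hcore
  set U : Fin (k * (m + 1)) → Set (Set X) :=
    fun i => W (finProdFinEquiv.symm i).1 (finProdFinEquiv.symm i).2 with hU
  refine ⟨R', mY * (m + 1) + m, U, fun i => hWd _ _, fun i => hWb _ _, ?_⟩
  set C : Set X := (⋃ i, ⋃₀ U i)ᶜ with hC
  set Yc : Set Y := (⋃ i, ⋃₀ V i)ᶜ with hYcdef
  have hmap : ∀ x : X, x ∈ C → f x ∈ Yc := by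
    intro x hxC
    intro hfx
    obtain ⟨_, ⟨i, rfl⟩, hfxV⟩ := hfx
    have hxW : x ∈ ⋃ j, ⋃₀ W i j := hWc i hfxV
    obtain ⟨_, ⟨j, rfl⟩, hxWj⟩ := hxW
    refine hxC (mem_iUnion.2 ⟨finProdFinEquiv (i, j), ?_⟩)
    have hidx : finProdFinEquiv.symm (finProdFinEquiv (i, j)) = (i, j) :=
      Equiv.symm_apply_apply _ _
    have hUW : U (finProdFinEquiv (i, j)) = W i j := by
      simp only [hU, hidx]
    rw [hUW]; exact hxWj
  set F : ↥C → ↥Yc := fun x => ⟨f x.val, hmap x.val x.2⟩ with hF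
  have hFlip : LipschitzWith 1 F := by
    rw [lipschitzWith_iff_dist_le_mul]
    intro x y
    rw [Subtype.dist_eq, Subtype.dist_eq]
    simpa using hf.dist_le_mul x.val y.val
  have hFfib : ∀ ρ : ℝ, 0 < ρ → AsdimLEUnif (fun y : ↥Yc => F ⁻¹' Metric.ball y ρ) m := by
    intro ρ hρ
    have h1 := unif_restrict (hfib ρ hρ) C
    have h2 := unif_reindex h1 (fun y : ↥Yc => y.val)
    refine unif_congr h2 ?_
    intro y
    ext x
    simp only [mem_preimage, mem_ball, Subtype.dist_eq]
    exact Iff.rfl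
  exact hurewicz_easy F hFlip m mY hFfib hYc
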